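/- Every divergence-free element of the 3D BDM₁ space is the curl of an element of U_K: if u ∈ BDM₁(K) with div u = 0, then u = curl a for some a ∈ U_K. -/

import Mathlib

/-- partial derivatives of a function of three real variables -/
noncomputable def pd1 (f : ℝ → ℝ → ℝ → ℝ) (x y z : ℝ) : ℝ := deriv (fun t => f t y z) x
noncomputable def pd2 (f : ℝ → ℝ → ℝ → ℝ) (x y z : ℝ) : ℝ := deriv (fun t => f x t z) y
noncomputable def pd3 (f : ℝ → ℝ → ℝ → ℝ) (x y z : ℝ) : ℝ := deriv (fun t => f x y t) z

/-- the divergence of a 3D vector field -/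
noncomputable def dv3 (q : ℝ → ℝ → ℝ → (Fin 3 → ℝ)) : ℝ → ℝ → ℝ → ℝ :=
  fun x y z => pd1 (fun a b c => q a b c 0) x y z + pd2 (fun a b c => q a b c 1) x y z
    + pd3 (fun a b c => q a b c 2) x y z

/-- the curl of a 3D vector field -/
noncomputable def curl3 (u : ℝ → ℝ → ℝ → (Fin 3 → ℝ)) : ℝ → ℝ → ℝ → (Fin 3 → ℝ) :=
  fun x y z =>
    ![pd2 (fun a b c => u a b c 2) x y z - pd3 (fun a b c => u a b c 1) x y z,
      pd3 (fun a b c => u a b c 0) x y z - pd1 (fun a b c => u a b c 2) x y z,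
      pd1 (fun a b c => u a b c 1) x y z - pd2 (fun a b c => u a b c 0) x y z]

/-- The 3D `BDM₁` space
`P₁(K,ℝ³) + curl span{(0,0,xy²),(0,0,x²y),(y²z,0,0),(yz²,0,0),(0,xz²,0),(0,x²z,0)}`,
where `curl(0,0,xy²) = (2xy,−y²,0)`, `curl(0,0,x²y) = (x²,−2xy,0)`,
`curl(y²z,0,0) = (0,y²,−2yz)`, `curl(yz²,0,0) = (0,2yz,−z²)`,
`curl(0,xz²,0) = (−2xz,0,z²)`, `curl(0,x²z,0) = (−x²,0,2xz)`. -/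
def BDM13 : Set (ℝ → ℝ → ℝ → (Fin 3 → ℝ)) :=
  {q | ∃ a : Fin 3 → Fin 4 → ℝ, ∃ c1 c2 c3 c4 c5 c6 : ℝ, ∀ x y z : ℝ,
    q x y z =
      ![a 0 0 + a 0 1 * x + a 0 2 * y + a 0 3 * z
          + c1 * (2 * x * y) + c2 * x ^ 2 - c5 * (2 * x * z) - c6 * x ^ 2,
        a 1 0 + a 1 1 * x + a 1 2 * y + a 1 3 * z
          - c1 * y ^ 2 - c2 * (2 * x * y) + c3 * y ^ 2 + c4 * (2 * y * z),
        a 2 0 + a 2 1 * x + a 2 2 * y + a 2 3 * z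
          - c3 * (2 * y * z) - c4 * z ^ 2 + c5 * z ^ 2 + c6 * (2 * x * z)]}

/-- The space `U_K = P_{1,1,1}(ℝ³)³ +
span{y²z,yz²,y²,z²} × span{x²z,xz²,x²,z²} × span{x²y,xy²,x²,y²}`. -/
def UK : Set (ℝ → ℝ → ℝ → (Fin 3 → ℝ)) :=
  {u | ∃ b : Fin 3 → Fin 8 → ℝ, ∃ α1 α2 α3 α4 β1 β2 β3 β4 γ1 γ2 γ3 γ4 : ℝ, ∀ x y z : ℝ,
    u x y z =
      ![b 0 0 + b 0 1 * x + b 0 2 * y + b 0 3 * z + b 0 4 * x * y + b 0 5 * x * z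
          + b 0 6 * y * z + b 0 7 * x * y * z
          + α1 * y ^ 2 * z + α2 * y * z ^ 2 + α3 * y ^ 2 + α4 * z ^ 2,
        b 1 0 + b 1 1 * x + b 1 2 * y + b 1 3 * z + b 1 4 * x * y + b 1 5 * x * z
          + b 1 6 * y * z + b 1 7 * x * y * z
          + β1 * x ^ 2 * z + β2 * x * z ^ 2 + β3 * x ^ 2 + β4 * z ^ 2,
        b 2 0 + b 2 1 * x + b 2 2 * y + b 2 3 * z + b 2 4 * x * y + b 2 5 * x * z
          + b 2 6 * y * z + b 2 7 * x * y * z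
          + γ1 * x ^ 2 * y + γ2 * x * y ^ 2 + γ3 * x ^ 2 + γ4 * y ^ 2]}

/-- derivative of a quadratic polynomial -/
private lemma dq (A B C : ℝ) (x : ℝ) : deriv (fun t => A + B * t + C * t ^ 2) x = B + 2 * C * x := by
  have h : HasDerivAt (fun t => A + B * t + C * t ^ 2) (B + C * (2 * x ^ 1)) x := by
    have h2 := (hasDerivAt_pow 2 x).const_mul C
    simpa [Pi.add_def] using ((hasDerivAt_const x A).add ((hasDerivAt_id x).const_mul B)).add h2
  rw [h.deriv]; ring

/-- explicit vector potential -/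
noncomputable def pot (a : Fin 3 → Fin 4 → ℝ) (c1 c2 c3 c4 c5 c6 : ℝ) :
    ℝ → ℝ → ℝ → (Fin 3 → ℝ) := fun x y z =>
  ![c3 * y ^ 2 * z + c4 * y * z ^ 2,
    a 2 0 * x + a 2 1 / 2 * x ^ 2 + a 2 2 * x * y + a 2 3 * x * z
      + c5 * x * z ^ 2 + c6 * x ^ 2 * z,
    -(a 1 0) * x - a 1 1 / 2 * x ^ 2 - a 1 2 * x * y - a 1 3 * x * z
      + a 0 0 * y + a 0 2 / 2 * y ^ 2 + a 0 3 * y * z + c1 * x * y ^ 2 + c2 * x ^ 2 * y]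

private lemma pot0 (a : Fin 3 → Fin 4 → ℝ) (c1 c2 c3 c4 c5 c6 x y z : ℝ) :
    pot a c1 c2 c3 c4 c5 c6 x y z 0 = c3 * y ^ 2 * z + c4 * y * z ^ 2 := by
  simp [pot]

private lemma pot1 (a : Fin 3 → Fin 4 → ℝ) (c1 c2 c3 c4 c5 c6 x y z : ℝ) :
    pot a c1 c2 c3 c4 c5 c6 x y z 1 =
      a 2 0 * x + a 2 1 / 2 * x ^ 2 + a 2 2 * x * y + a 2 3 * x * z
        + c5 * x * z ^ 2 + c6 * x ^ 2 * z := by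
  simp [pot]

private lemma pot2 (a : Fin 3 → Fin 4 → ℝ) (c1 c2 c3 c4 c5 c6 x y z : ℝ) :
    pot a c1 c2 c3 c4 c5 c6 x y z 2 =
      -(a 1 0) * x - a 1 1 / 2 * x ^ 2 - a 1 2 * x * y - a 1 3 * x * z
        + a 0 0 * y + a 0 2 / 2 * y ^ 2 + a 0 3 * y * z + c1 * x * y ^ 2 + c2 * x ^ 2 * y := by
  simp [pot]

private lemma cv5 (v0 v1 v2 v3 v4 v5 v6 v7 : ℝ) :
    (![v0, v1, v2, v3, v4, v5, v6, v7] : Fin 8 → ℝ) 5 = v5 := rfl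

private lemma cv6 (v0 v1 v2 v3 v4 v5 v6 v7 : ℝ) :
    (![v0, v1, v2, v3, v4, v5, v6, v7] : Fin 8 → ℝ) 6 = v6 := rfl

private lemma cv7 (v0 v1 v2 v3 v4 v5 v6 v7 : ℝ) :
    (![v0, v1, v2, v3, v4, v5, v6, v7] : Fin 8 → ℝ) 7 = v7 := rfl

/-- Every divergence-free element of the 3D `BDM₁` space is the curl of an
element of `U_K`. -/
theorem stmt_12 :
    ∀ u ∈ BDM13, dv3 u = (fun _ _ _ => 0) → ∃ a ∈ UK, u = curl3 a := by
  rintro u ⟨a, c1, c2, c3, c4, c5, c6, hu⟩ hdiv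
  -- the divergence-free constraint
  have e1 : (fun t : ℝ => u t 0 0 0) = fun t => a 0 0 + a 0 1 * t + (c2 - c6) * t ^ 2 := by
    funext t; rw [hu]
    simp only [Matrix.cons_val_zero]; ring
  have e2 : (fun t : ℝ => u 0 t 0 1) = fun t => a 1 0 + a 1 2 * t + (c3 - c1) * t ^ 2 := by
    funext t; rw [hu]
    simp only [Matrix.cons_val_one, Matrix.head_cons, Matrix.cons_val_zero]; ring
  have e3 : (fun t : ℝ => u 0 0 t 2) = fun t => a 2 0 + a 2 3 * t + (c5 - c4) * t ^ 2 := by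
    funext t; rw [hu]
    simp only [Matrix.cons_val_two, Matrix.tail_cons, Matrix.head_cons]; ring
  have h0 := congrFun (congrFun (congrFun hdiv 0) 0) 0
  simp only [dv3, pd1, pd2, pd3] at h0
  rw [e1, e2, e3, dq, dq, dq] at h0
  have hc : a 0 1 + a 1 2 + a 2 3 = 0 := by linarith
  refine ⟨pot a c1 c2 c3 c4 c5 c6, ?_, ?_⟩
  · -- membership in UK
    refine ⟨![![0, 0, 0, 0, 0, 0, 0, 0],
              ![0, a 2 0, 0, 0, a 2 2, a 2 3, 0, 0],
              ![0, -(a 1 0), a 0 0, 0, -(a 1 2), -(a 1 3), a 0 3, 0]],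
            c3, c4, 0, 0, c6, c5, a 2 1 / 2, 0, c2, c1, -(a 1 1) / 2, a 0 2 / 2, ?_⟩
    intro x y z
    funext i
    fin_cases i <;> · simp [pot, cv5, cv6, cv7, Matrix.vecHead, Matrix.vecTail]; try ring
  · -- u = curl of the potential
    funext x y z
    have key : curl3 (pot a c1 c2 c3 c4 c5 c6) x y z =
        ![a 0 0 - a 1 2 * x - a 2 3 * x + a 0 2 * y + a 0 3 * z
            + 2 * c1 * x * y + c2 * x ^ 2 - 2 * c5 * x * z - c6 * x ^ 2,
          a 1 0 + a 1 1 * x + a 1 2 * y + a 1 3 * z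
            - c1 * y ^ 2 - 2 * c2 * x * y + c3 * y ^ 2 + 2 * c4 * y * z,
          a 2 0 + a 2 1 * x + a 2 2 * y + a 2 3 * z
            - 2 * c3 * y * z - c4 * z ^ 2 + c5 * z ^ 2 + 2 * c6 * x * z] := by
      simp only [curl3, pd1, pd2, pd3]
      rw [show (fun t => pot a c1 c2 c3 c4 c5 c6 x t z 2) =
            fun t => (-(a 1 0) * x - a 1 1 / 2 * x ^ 2 - a 1 3 * x * z)
              + (-(a 1 2) * x + a 0 0 + a 0 3 * z + c2 * x ^ 2) * t
              + (a 0 2 / 2 + c1 * x) * t ^ 2 from funext fun t => by rw [pot2]; ring, dq]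
      rw [show (fun t => pot a c1 c2 c3 c4 c5 c6 x y t 1) =
            fun t => (a 2 0 * x + a 2 1 / 2 * x ^ 2 + a 2 2 * x * y)
              + (a 2 3 * x + c6 * x ^ 2) * t
              + (c5 * x) * t ^ 2 from funext fun t => by rw [pot1]; ring, dq]
      rw [show (fun t => pot a c1 c2 c3 c4 c5 c6 x y t 0) =
            fun t => (0 : ℝ) + (c3 * y ^ 2) * t + (c4 * y) * t ^ 2 from
              funext fun t => by rw [pot0]; ring, dq]
      rw [show (fun t => pot a c1 c2 c3 c4 c5 c6 t y z 2) =
            fun t => (a 0 0 * y + a 0 2 / 2 * y ^ 2 + a 0 3 * y * z)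
              + (-(a 1 0) - a 1 2 * y - a 1 3 * z + c1 * y ^ 2) * t
              + (-(a 1 1) / 2 + c2 * y) * t ^ 2 from funext fun t => by rw [pot2]; ring, dq]
      rw [show (fun t => pot a c1 c2 c3 c4 c5 c6 t y z 1) =
            fun t => (0 : ℝ) + (a 2 0 + a 2 2 * y + a 2 3 * z + c5 * z ^ 2) * t
              + (a 2 1 / 2 + c6 * z) * t ^ 2 from funext fun t => by rw [pot1]; ring, dq]
      rw [show (fun t => pot a c1 c2 c3 c4 c5 c6 x t z 0) =
            fun t => (0 : ℝ) + (c4 * z ^ 2) * t + (c3 * z) * t ^ 2 from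
              funext fun t => by rw [pot0]; ring, dq]
      funext i
      fin_cases i <;> · simp; try ring
    rw [hu, key]
    funext i
    fin_cases i
    · simp only [Fin.zero_eta, Matrix.cons_val_zero]
      linear_combination x * hc
    · simp; ring
    · simp; ring
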